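/- Let P ⊂ ℝⁿ be a nonempty compact convex set and f a C¹ convex function on P. Suppose a minimizer x* of f over P satisfies B(x*, r) ⊂ P for some r > 0. Then for all x ∈ P, with v ∈ argmax_{u ∈ P}⟨∇f(x), x − u⟩, it holds that ⟨∇f(x), x − v⟩ ≥ r‖∇f(x)‖ ≥ r⟨∇f(x), x − x*⟩/‖x − x*‖ (the latter when x ≠ x*). -/

import Mathlib

open Set Metric
open scoped RealInnerProductSpace

/-- scaling inequality from convexity when the minimizer is in the
interior of `P`. -/
theorem scaling_inequality_interior {n : ℕ}
    (P : Set (EuclideanSpace ℝ (Fin n)))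
    (hP : IsCompact P) (hPconv : Convex ℝ P) (hPne : P.Nonempty)
    (f : EuclideanSpace ℝ (Fin n) → ℝ)
    (f' : EuclideanSpace ℝ (Fin n) → EuclideanSpace ℝ (Fin n))
    (hf : ConvexOn ℝ P f)
    (hf' : ∀ x ∈ P, HasGradientAt f (f' x) x)
    (xstar : EuclideanSpace ℝ (Fin n)) (hxstar : xstar ∈ P)
    (hmin : IsMinOn f P xstar)
    (r : ℝ) (hr : 0 < r) (hball : closedBall xstar r ⊆ P) :
    ∀ x ∈ P, ∀ v ∈ P, (∀ u ∈ P, ⟪f' x, x - u⟫ ≤ ⟪f' x, x - v⟫) →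
      r * ‖f' x‖ ≤ ⟪f' x, x - v⟫ ∧
        (x ≠ xstar → r * ⟪f' x, x - xstar⟫ / ‖x - xstar‖ ≤ r * ‖f' x‖) := by
  intro x hx v hv hvmax
  -- Key fact: ⟪f' x, x - xstar⟫ ≥ 0, from the gradient inequality for convex f
  have hkey : 0 ≤ ⟪f' x, x - xstar⟫ := by
    set c : ℝ →ᵃ[ℝ] EuclideanSpace ℝ (Fin n) := AffineMap.lineMap x xstar with hc
    have hmem : ∀ t ∈ Icc (0:ℝ) 1, c t ∈ P := by
      intro t ht
      have : c t = (1 - t) • x + t • xstar := AffineMap.lineMap_apply_module x xstar t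
      rw [this]
      exact hPconv hx hxstar (by linarith [ht.2]) ht.1 (by ring)
    have hconv : ConvexOn ℝ (Icc (0:ℝ) 1) (f ∘ c) :=
      (hf.comp_affineMap c).subset (fun t ht => hmem t ht) (convex_Icc 0 1)
    have hderc : HasDerivAt c (xstar - x) 0 := by
      have : HasDerivAt (fun t : ℝ => x + t • (xstar - x)) (xstar - x) 0 := by
        simpa using ((hasDerivAt_id (0:ℝ)).smul_const (xstar - x)).const_add x
      convert this using 2 with t
      simp [hc, AffineMap.lineMap_apply_module]
      module
    have hderiv : HasDerivAt (f ∘ c) ⟪f' x, xstar - x⟫ 0 := by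
      have h0 : c 0 = x := by simp [hc]
      have hfd : HasFDerivAt f ((InnerProductSpace.toDual ℝ _) (f' x)) (c 0) := by
        rw [h0]; exact (hf' x hx).hasFDerivAt
      have := hfd.comp_hasDerivAt 0 hderc
      simpa using this
    have hslope := hconv.le_slope_of_hasDerivAt (x := 0) (y := 1)
      (by norm_num) (by norm_num) one_pos hderiv
    have h0 : c 0 = x := by simp [hc]
    have h1 : c 1 = xstar := by simp [hc]
    have hle : f xstar ≤ f x := hmin hx
    have : ⟪f' x, xstar - x⟫ ≤ f xstar - f x := by
      simpa [slope, h0, h1] using hslope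
    have h2 : ⟪f' x, xstar - x⟫ ≤ 0 := by linarith
    have : ⟪f' x, x - xstar⟫ = -⟪f' x, xstar - x⟫ := by
      rw [← inner_neg_right]; congr 1; abel
    linarith [this ▸ neg_nonneg.mpr h2]
  constructor
  · -- r ‖f' x‖ ≤ ⟪f' x, x - v⟫
    by_cases hz : f' x = 0
    · have := hvmax xstar hxstar
      simp only [hz, inner_zero_left] at this ⊢
      simp
    · have hn : 0 < ‖f' x‖ := norm_pos_iff.mpr hz
      set u := xstar - (r / ‖f' x‖) • f' x with hu
      have humem : u ∈ P := by
        apply hball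
        simp only [mem_closedBall, hu, dist_eq_norm]
        have : xstar - (r / ‖f' x‖) • f' x - xstar = -((r / ‖f' x‖) • f' x) := by abel
        rw [this, norm_neg, norm_smul, norm_div, Real.norm_eq_abs, abs_of_pos hr,
          norm_norm, div_mul_cancel₀ _ (ne_of_gt hn)]
      have hcalc : ⟪f' x, x - u⟫ = ⟪f' x, x - xstar⟫ + r * ‖f' x‖ := by
        have : x - u = (x - xstar) + (r / ‖f' x‖) • f' x := by simp [hu]; abel
        rw [this, inner_add_right, real_inner_smul_right, real_inner_self_eq_norm_sq]
        field_simp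
      have := hvmax u humem
      rw [hcalc] at this
      linarith
  · -- Cauchy–Schwarz part
    intro hne
    have hnx : 0 < ‖x - xstar‖ := by
      rw [norm_pos_iff]
      intro h
      exact hne (by rwa [sub_eq_zero] at h)
    rw [div_le_iff₀ hnx]
    have hcs : ⟪f' x, x - xstar⟫ ≤ ‖f' x‖ * ‖x - xstar‖ := real_inner_le_norm _ _
    calc r * ⟪f' x, x - xstar⟫ ≤ r * (‖f' x‖ * ‖x - xstar‖) := by
          exact mul_le_mul_of_nonneg_left hcs hr.le
      _ = r * ‖f' x‖ * ‖x - xstar‖ := by ring
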